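/- For every τ in the upper half-plane H, ℘̃a(1/2, τ − 1) = − ℘̃a(1/2, τ); in particular the function τ ↦ ℘̃a(1/2, τ) is 2-periodic but not 1-periodic in τ. -/

import Mathlib

open Complex

/-- The normalized Weierstrass function
`℘a(z,τ) = π⁻² (1/z² + Σ_{ω ∈ Λ_τ, ω ≠ 0} (1/(z-ω)² − 1/ω²))`, where `Λ_τ = ℤ + τℤ`. -/
noncomputable def wpa (z τ : ℂ) : ℂ :=
  (Real.pi : ℂ)⁻¹ ^ 2 * (1 / z ^ 2 +
    ∑' p : ℤ × ℤ, if p = 0 then 0 else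
      (1 / (z - ((p.1 : ℂ) + (p.2 : ℂ) * τ)) ^ 2 - 1 / ((p.1 : ℂ) + (p.2 : ℂ) * τ) ^ 2))

/-- The renormalized function
`℘̃a(z,τ) = π⁻² Σ_{(n,m)∈ℤ²} (1/(z+(n+1/2)+(m+1/2)τ)² − 1/((n+1/2)+(m+1/2)τ)²)`. -/
noncomputable def wpt (z τ : ℂ) : ℂ :=
  (Real.pi : ℂ)⁻¹ ^ 2 *
    ∑' p : ℤ × ℤ,
      (1 / (z + ((p.1 : ℂ) + 1 / 2) + ((p.2 : ℂ) + 1 / 2) * τ) ^ 2 -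
        1 / (((p.1 : ℂ) + 1 / 2) + ((p.2 : ℂ) + 1 / 2) * τ) ^ 2)

namespace WptAux

open EisensteinSeries Finset

/-- The lattice point `n + a/2 + (m+1/2)τ` for `p = (n, m)`. -/
noncomputable def W (τ : ℂ) (a : ℤ) (p : ℤ × ℤ) : ℂ :=
  ((p.1 : ℂ) + (a : ℂ) / 2) + ((p.2 : ℂ) + 1 / 2) * τ

/-- The summand `1 / (n + a/2 + (m+1/2)τ)²`. -/
noncomputable def V (τ : ℂ) (a : ℤ) (p : ℤ × ℤ) : ℂ := 1 / W τ a p ^ 2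

lemma norm_diff_le {x y : ℂ} {u v d : ℝ} (hu : 0 < u) (hv : 0 < v)
    (hx : u ≤ ‖x‖) (hy : v ≤ ‖y‖) (hd : ‖y - x‖ ≤ d) :
    ‖1 / x ^ 2 - 1 / y ^ 2‖ ≤ d * (1 / (u * v ^ 2)) + d * (1 / (u ^ 2 * v)) := by
  have hxn : 0 < ‖x‖ := lt_of_lt_of_le hu hx
  have hyn : 0 < ‖y‖ := lt_of_lt_of_le hv hy
  have hx0 : x ≠ 0 := by intro h; rw [h, norm_zero] at hxn; exact lt_irrefl _ hxn
  have hy0 : y ≠ 0 := by intro h; rw [h, norm_zero] at hyn; exact lt_irrefl _ hyn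
  have hd0 : 0 ≤ d := le_trans (norm_nonneg _) hd
  have e : 1 / x ^ 2 - 1 / y ^ 2 = (y - x) * (1 / (x * y ^ 2)) + (y - x) * (1 / (x ^ 2 * y)) := by
    field_simp
    ring
  rw [e]
  refine (norm_add_le _ _).trans ?_
  rw [norm_mul, norm_mul]
  have e1 : ‖1 / (x * y ^ 2)‖ = 1 / (‖x‖ * ‖y‖ ^ 2) := by
    rw [norm_div, norm_one, norm_mul, norm_pow]
  have e2 : ‖1 / (x ^ 2 * y)‖ = 1 / (‖x‖ ^ 2 * ‖y‖) := by
    rw [norm_div, norm_one, norm_mul, norm_pow]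
  rw [e1, e2]
  gcongr

lemma vec_ne (a : ℤ) (p : ℤ × ℤ) : (![2 * p.2 + 1, 2 * p.1 + a] : Fin 2 → ℤ) ≠ 0 := by
  intro h
  have h0 := congrFun h 0
  simp only [Matrix.cons_val_zero, Pi.zero_apply] at h0
  omega

lemma one_le_nu (p : ℤ × ℤ) : (1 : ℝ) ≤ ‖(![2 * p.2 + 1, 2 * p.1] : Fin 2 → ℤ)‖ := by
  rw [norm_eq_max_natAbs]
  simp only [Matrix.cons_val_zero, Matrix.cons_val_one, Matrix.head_cons]
  have h1 : 1 ≤ (2 * p.2 + 1).natAbs := by omega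
  exact_mod_cast le_trans h1 (Nat.le_max_left _ _)

lemma lb {τ : ℂ} (hτ : 0 < τ.im) {a : ℤ} (ha : a.natAbs ≤ 2) (p : ℤ × ℤ) :
    r ⟨τ, hτ⟩ / 10 * ‖(![2 * p.2 + 1, 2 * p.1] : Fin 2 → ℤ)‖ ≤ ‖W τ a p‖ := by
  have hr : 0 < r ⟨τ, hτ⟩ := r_pos _
  have h1 : r ⟨τ, hτ⟩ * ‖(![2 * p.2 + 1, 2 * p.1 + a] : Fin 2 → ℤ)‖ ≤
      ‖((2 * p.2 + 1 : ℤ) : ℂ) * τ + ((2 * p.1 + a : ℤ) : ℂ)‖ :=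
    r_mul_max_le (⟨τ, hτ⟩ : UpperHalfPlane) (vec_ne a p)
  have hW2 : ((2 * p.2 + 1 : ℤ) : ℂ) * τ + ((2 * p.1 + a : ℤ) : ℂ) = 2 * W τ a p := by
    simp only [W]; push_cast; ring
  have h1' : r ⟨τ, hτ⟩ * ‖(![2 * p.2 + 1, 2 * p.1 + a] : Fin 2 → ℤ)‖ ≤ 2 * ‖W τ a p‖ := by
    refine le_trans h1 (le_of_eq ?_)
    rw [hW2, norm_mul, Complex.norm_two]
  have h5 : ‖(![2 * p.2 + 1, 2 * p.1] : Fin 2 → ℤ)‖ ≤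
      5 * ‖(![2 * p.2 + 1, 2 * p.1 + a] : Fin 2 → ℤ)‖ := by
    rw [norm_eq_max_natAbs, norm_eq_max_natAbs]
    simp only [Matrix.cons_val_zero, Matrix.cons_val_one, Matrix.head_cons]
    have hkey : (2 * p.2 + 1).natAbs ⊔ (2 * p.1).natAbs ≤
        5 * ((2 * p.2 + 1).natAbs ⊔ (2 * p.1 + a).natAbs) := by
      have hA := Nat.le_max_left (2 * p.2 + 1).natAbs (2 * p.1 + a).natAbs
      have hB := Nat.le_max_right (2 * p.2 + 1).natAbs (2 * p.1 + a).natAbs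
      refine Nat.max_le.mpr ⟨?_, ?_⟩ <;> omega
    exact_mod_cast hkey
  have hnn : 0 ≤ r ⟨τ, hτ⟩ / 10 := by positivity
  calc r ⟨τ, hτ⟩ / 10 * ‖(![2 * p.2 + 1, 2 * p.1] : Fin 2 → ℤ)‖
      ≤ r ⟨τ, hτ⟩ / 10 * (5 * ‖(![2 * p.2 + 1, 2 * p.1 + a] : Fin 2 → ℤ)‖) := by
        exact mul_le_mul_of_nonneg_left h5 hnn
    _ = (r ⟨τ, hτ⟩ * ‖(![2 * p.2 + 1, 2 * p.1 + a] : Fin 2 → ℤ)‖) / 2 := by ring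
    _ ≤ (2 * ‖W τ a p‖) / 2 := by linarith [h1']
    _ = ‖W τ a p‖ := by ring

lemma summable_aux (c : ℝ) :
    Summable fun p : ℤ × ℤ => c * ‖(![2 * p.2 + 1, 2 * p.1] : Fin 2 → ℤ)‖ ^ (-(3 : ℝ)) := by
  apply Summable.mul_left
  have h3 := summable_one_div_norm_rpow (by norm_num : (2 : ℝ) < 3)
  have hinj : Function.Injective (fun p : ℤ × ℤ => (![2 * p.2 + 1, 2 * p.1] : Fin 2 → ℤ)) := by
    intro p q h
    have h0 := congrFun h 0
    have h1 := congrFun h 1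
    simp only [Matrix.cons_val_zero, Matrix.cons_val_one, Matrix.head_cons] at h0 h1
    exact Prod.ext (by omega) (by omega)
  exact h3.comp_injective hinj

lemma rpow_neg3 {ν : ℝ} (hν : 0 ≤ ν) : ν ^ (-(3 : ℝ)) = 1 / ν ^ 3 := by
  rw [Real.rpow_neg hν, one_div, show (3 : ℝ) = ((3 : ℕ) : ℝ) by norm_num, Real.rpow_natCast]

lemma summable_V_sub {τ : ℂ} (hτ : 0 < τ.im) {a b : ℤ} (ha : a.natAbs ≤ 2) (hb : b.natAbs ≤ 2) :
    Summable fun p : ℤ × ℤ => V τ a p - V τ b p := by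
  have hρ : 0 < r ⟨τ, hτ⟩ := r_pos _
  set c : ℝ := r ⟨τ, hτ⟩ / 10 with hcdef
  have hc : 0 < c := by positivity
  apply Summable.of_norm_bounded (summable_aux (4 / c ^ 3))
  intro p
  set ν : ℝ := ‖(![2 * p.2 + 1, 2 * p.1] : Fin 2 → ℤ)‖ with hνdef
  have hν1 : (1 : ℝ) ≤ ν := one_le_nu p
  have hν : 0 < ν := by linarith
  have hxa : c * ν ≤ ‖W τ a p‖ := lb hτ ha p
  have hxb : c * ν ≤ ‖W τ b p‖ := lb hτ hb p
  have hd : ‖W τ b p - W τ a p‖ ≤ 2 := by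
    have he : W τ b p - W τ a p = ((b - a : ℤ) : ℂ) / 2 := by
      simp only [W]; push_cast; ring
    rw [he]
    rw [norm_div]
    have h2 : ‖(2 : ℂ)‖ = 2 := by norm_num
    rw [h2]
    have hba : ‖((b - a : ℤ) : ℂ)‖ ≤ 4 := by
      have h4 : (b - a).natAbs ≤ 4 := by omega
      have : ‖((b - a : ℤ) : ℂ)‖ = ((b - a).natAbs : ℝ) := by
        rw [Complex.norm_intCast, Nat.cast_natAbs, Int.cast_abs]
      rw [this]
      exact_mod_cast h4
    linarith
  have hbound := norm_diff_le (by positivity) (by positivity) hxa hxb hd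
  have heq : 2 * (1 / (c * ν * (c * ν) ^ 2)) + 2 * (1 / ((c * ν) ^ 2 * (c * ν))) =
      4 / c ^ 3 * ν ^ (-(3 : ℝ)) := by
    rw [rpow_neg3 hν.le]
    field_simp
    ring
  calc ‖V τ a p - V τ b p‖ = ‖1 / W τ a p ^ 2 - 1 / W τ b p ^ 2‖ := rfl
    _ ≤ 2 * (1 / (c * ν * (c * ν) ^ 2)) + 2 * (1 / ((c * ν) ^ 2 * (c * ν))) := hbound
    _ = 4 / c ^ 3 * ν ^ (-(3 : ℝ)) := heq

lemma summable_row {τ : ℂ} (hτ : 0 < τ.im) {a : ℤ} (ha : a.natAbs ≤ 2) (m : ℤ) :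
    Summable fun n : ℤ => V τ a (n, m) := by
  have hρ : 0 < r ⟨τ, hτ⟩ := r_pos _
  set c : ℝ := r ⟨τ, hτ⟩ / 10 with hcdef
  have hc : 0 < c := by positivity
  apply Summable.of_norm_bounded_eventually (g := fun n : ℤ => 1 / (4 * c ^ 2) * (1 / (n : ℝ) ^ 2))
  · exact (Real.summable_one_div_int_pow.mpr one_lt_two).mul_left _
  · rw [Filter.eventually_cofinite]
    apply Set.Finite.subset (Set.finite_singleton (0 : ℤ))
    intro n hn
    simp only [Set.mem_setOf_eq] at hn
    simp only [Set.mem_singleton_iff]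
    by_contra h0
    apply hn
    have hW := lb hτ ha (n, m)
    have h2n : ((2 * n).natAbs : ℝ) ≤ ‖(![2 * m + 1, 2 * n] : Fin 2 → ℤ)‖ := by
      rw [norm_eq_max_natAbs]
      simp only [Matrix.cons_val_zero, Matrix.cons_val_one, Matrix.head_cons]
      exact_mod_cast Nat.le_max_right _ _
    have hWlb : c * (2 * (n.natAbs : ℝ)) ≤ ‖W τ a (n, m)‖ := by
      refine le_trans ?_ hW
      have : ((2 * n).natAbs : ℝ) = 2 * (n.natAbs : ℝ) := by
        have : (2 * n).natAbs = 2 * n.natAbs := by omega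
        rw [this]; push_cast; ring
      rw [← this]
      exact mul_le_mul_of_nonneg_left h2n hc.le
    have hna : (1 : ℝ) ≤ (n.natAbs : ℝ) := by
      exact_mod_cast (by omega : 1 ≤ n.natAbs)
    have hpos : 0 < c * (2 * (n.natAbs : ℝ)) := by positivity
    have hnorm : ‖V τ a (n, m)‖ = 1 / ‖W τ a (n, m)‖ ^ 2 := by
      rw [show V τ a (n, m) = 1 / W τ a (n, m) ^ 2 from rfl, norm_div, norm_one, norm_pow]
    rw [hnorm]
    have hsq : ((n.natAbs : ℝ)) ^ 2 = (n : ℝ) ^ 2 := by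
      rw [Nat.cast_natAbs, Int.cast_abs, _root_.sq_abs]
    calc 1 / ‖W τ a (n, m)‖ ^ 2 ≤ 1 / (c * (2 * (n.natAbs : ℝ))) ^ 2 := by
          gcongr
      _ = 1 / (4 * c ^ 2) * (1 / (n : ℝ) ^ 2) := by
          rw [← hsq]; field_simp; ring

lemma row_telescope {τ : ℂ} (hτ : 0 < τ.im) (m : ℤ) :
    ∑' n : ℤ, (V τ 2 (n, m) - V τ 0 (n, m)) = 0 := by
  have h0 : Summable fun n : ℤ => V τ 0 (n, m) := summable_row hτ (by norm_num) m
  have hshift : Summable fun n : ℤ => V τ 0 (n + 1, m) := by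
    have := (Equiv.addRight (1 : ℤ)).summable_iff.mpr h0
    simpa [Function.comp_def] using this
  have hcong : ∀ n : ℤ, V τ 2 (n, m) - V τ 0 (n, m) = V τ 0 (n + 1, m) - V τ 0 (n, m) := by
    intro n
    have : W τ 2 (n, m) = W τ 0 (n + 1, m) := by
      simp only [W]; push_cast; ring
    simp only [V, this]
  rw [tsum_congr hcong, hshift.tsum_sub h0, sub_eq_zero]
  exact (Equiv.addRight (1 : ℤ)).tsum_eq (fun n => V τ 0 (n, m))

lemma tsum_D_zero {τ : ℂ} (hτ : 0 < τ.im) : ∑' p : ℤ × ℤ, (V τ 2 p - V τ 0 p) = 0 := by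
  have hD : Summable fun p : ℤ × ℤ => V τ 2 p - V τ 0 p :=
    summable_V_sub hτ (by norm_num) (by norm_num)
  have hswap : Summable fun q : ℤ × ℤ => V τ 2 (q.2, q.1) - V τ 0 (q.2, q.1) := by
    have := (Equiv.prodComm ℤ ℤ).summable_iff.mpr hD
    exact this
  have hrow : ∀ b : ℤ, Summable fun n : ℤ => V τ 2 (n, b) - V τ 0 (n, b) :=
    fun b => (summable_row hτ (by norm_num) b).sub (summable_row hτ (by norm_num) b)
  calc ∑' p : ℤ × ℤ, (V τ 2 p - V τ 0 p)
      = ∑' q : ℤ × ℤ, (V τ 2 (q.2, q.1) - V τ 0 (q.2, q.1)) :=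
        ((Equiv.prodComm ℤ ℤ).tsum_eq (fun p : ℤ × ℤ => V τ 2 p - V τ 0 p)).symm
    _ = ∑' (b : ℤ) (n : ℤ), (V τ 2 (n, b) - V τ 0 (n, b)) := hswap.tsum_prod' hrow
    _ = 0 := by
        rw [tsum_congr (fun b => row_telescope hτ b), tsum_zero]

/-- The shear `(n, m) ↦ (n + m, m)`. -/
def shear : ℤ × ℤ ≃ ℤ × ℤ where
  toFun p := (p.1 + p.2, p.2)
  invFun p := (p.1 - p.2, p.2)
  left_inv p := by simp
  right_inv p := by simp

lemma key : ∀ τ : ℂ, 0 < τ.im → wpt (1 / 2) (τ - 1) = -wpt (1 / 2) τ := by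
  intro τ hτ
  unfold wpt
  rw [← mul_neg, ← tsum_neg]
  congr 1
  have hL : ∀ p : ℤ × ℤ,
      (1 / ((1 : ℂ) / 2 + ((p.1 : ℂ) + 1 / 2) + ((p.2 : ℂ) + 1 / 2) * (τ - 1)) ^ 2 -
        1 / (((p.1 : ℂ) + 1 / 2) + ((p.2 : ℂ) + 1 / 2) * (τ - 1)) ^ 2) =
      V τ 1 (shear.symm p) - V τ 0 (shear.symm p) := by
    intro p
    show _ = V τ 1 (p.1 - p.2, p.2) - V τ 0 (p.1 - p.2, p.2)
    simp only [V, W]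
    push_cast
    ring
  calc ∑' p : ℤ × ℤ,
      (1 / ((1 : ℂ) / 2 + ((p.1 : ℂ) + 1 / 2) + ((p.2 : ℂ) + 1 / 2) * (τ - 1)) ^ 2 -
        1 / (((p.1 : ℂ) + 1 / 2) + ((p.2 : ℂ) + 1 / 2) * (τ - 1)) ^ 2)
      = ∑' p : ℤ × ℤ, (V τ 1 (shear.symm p) - V τ 0 (shear.symm p)) := tsum_congr hL
    _ = ∑' q : ℤ × ℤ, (V τ 1 q - V τ 0 q) :=
        shear.symm.tsum_eq (fun q => V τ 1 q - V τ 0 q)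
    _ = ∑' q : ℤ × ℤ, ((V τ 1 q - V τ 2 q) + (V τ 2 q - V τ 0 q)) :=
        tsum_congr (fun q => by ring)
    _ = (∑' q : ℤ × ℤ, (V τ 1 q - V τ 2 q)) + ∑' q : ℤ × ℤ, (V τ 2 q - V τ 0 q) :=
        Summable.tsum_add (summable_V_sub hτ (by norm_num) (by norm_num))
          (summable_V_sub hτ (by norm_num) (by norm_num))
    _ = ∑' q : ℤ × ℤ, (V τ 1 q - V τ 2 q) := by rw [tsum_D_zero hτ, add_zero]
    _ = ∑' p : ℤ × ℤ,
        -(1 / ((1 : ℂ) / 2 + ((p.1 : ℂ) + 1 / 2) + ((p.2 : ℂ) + 1 / 2) * τ) ^ 2 -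
          1 / (((p.1 : ℂ) + 1 / 2) + ((p.2 : ℂ) + 1 / 2) * τ) ^ 2) := by
        refine tsum_congr (fun p => ?_)
        simp only [V, W]
        push_cast
        ring

/-! ### Non-vanishing at `τ = I` -/

lemma re_inv_sq (x y : ℝ) : (1 / ((x : ℂ) + (y : ℂ) * I) ^ 2).re = (x ^ 2 - y ^ 2) / ((x ^ 2 + y ^ 2) ^ 2) := by
  have h2 : ((x : ℂ) + (y : ℂ) * I) ^ 2 = ((x ^ 2 - y ^ 2 : ℝ) : ℂ) + ((2 * x * y : ℝ) : ℂ) * I := by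
    apply Complex.ext
    · simp only [pow_two, Complex.mul_re, Complex.add_re, Complex.add_im, Complex.mul_im,
        Complex.ofReal_re, Complex.ofReal_im, Complex.I_re, Complex.I_im]
      ring
    · simp only [pow_two, Complex.mul_re, Complex.add_re, Complex.add_im, Complex.mul_im,
        Complex.ofReal_re, Complex.ofReal_im, Complex.I_re, Complex.I_im]
      ring
  rw [one_div, h2, Complex.inv_re, Complex.normSq_add_mul_I]
  simp only [Complex.add_re, Complex.ofReal_re, Complex.mul_re, Complex.I_re, Complex.I_im,
    Complex.ofReal_im, mul_zero, zero_mul, mul_one, sub_zero, add_zero]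
  congr 1
  ring

lemma W_I_eq (a : ℤ) (p : ℤ × ℤ) :
    W I a p = (((p.1 : ℝ) + (a : ℝ) / 2 : ℝ) : ℂ) + (((p.2 : ℝ) + 1 / 2 : ℝ) : ℂ) * I := by
  simp only [W]
  push_cast
  ring

lemma re_V (a : ℤ) (p : ℤ × ℤ) :
    (V I a p).re = (((p.1 : ℝ) + (a : ℝ) / 2) ^ 2 - ((p.2 : ℝ) + 1 / 2) ^ 2) /
      ((((p.1 : ℝ) + (a : ℝ) / 2) ^ 2 + ((p.2 : ℝ) + 1 / 2) ^ 2) ^ 2) := by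
  rw [show V I a p = 1 / W I a p ^ 2 from rfl, W_I_eq, re_inv_sq]

lemma normsq_W_I (a : ℤ) (p : ℤ × ℤ) :
    ‖W I a p‖ ^ 2 = ((p.1 : ℝ) + (a : ℝ) / 2) ^ 2 + ((p.2 : ℝ) + 1 / 2) ^ 2 := by
  rw [W_I_eq, Complex.sq_norm, Complex.normSq_add_mul_I]

lemma sq_lb_of_pm {x k c : ℝ} (h : x = k ∨ x = -k) (hc : 0 ≤ c) (hck : c ≤ k) :
    (k - c) ^ 2 ≤ (x + c) ^ 2 := by
  rcases h with h | h <;> rw [h] <;> nlinarith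

lemma W1_lb (p : ℤ × ℤ) (k : ℕ) (hk : 4 ≤ k) (hp : p.1.natAbs ⊔ p.2.natAbs = k) :
    (k : ℝ) - 1 / 2 ≤ ‖W I 1 p‖ := by
  have hk4 : (4 : ℝ) ≤ (k : ℝ) := by exact_mod_cast hk
  have hnn : 0 ≤ ‖W I 1 p‖ := norm_nonneg _
  have hsq : ((k : ℝ) - 1 / 2) ^ 2 ≤ ‖W I 1 p‖ ^ 2 := by
    rw [normsq_W_I]
    rcases max_choice p.1.natAbs p.2.natAbs with hc | hc <;> rw [hc] at hp
    · have h12 : p.1 = (k : ℤ) ∨ p.1 = -(k : ℤ) := by omega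
      have h12' : (p.1 : ℝ) = (k : ℝ) ∨ (p.1 : ℝ) = -(k : ℝ) := by
        rcases h12 with h | h <;> [left; right] <;> exact_mod_cast congrArg (Int.cast : ℤ → ℝ) h
      have := sq_lb_of_pm h12' (by norm_num : (0:ℝ) ≤ 1/2) (by linarith)
      have h2 : (0:ℝ) ≤ ((p.2 : ℝ) + 1 / 2) ^ 2 := sq_nonneg _
      push_cast
      push_cast at this
      linarith
    · have h12 : p.2 = (k : ℤ) ∨ p.2 = -(k : ℤ) := by omega
      have h12' : (p.2 : ℝ) = (k : ℝ) ∨ (p.2 : ℝ) = -(k : ℝ) := by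
        rcases h12 with h | h <;> [left; right] <;> exact_mod_cast congrArg (Int.cast : ℤ → ℝ) h
      have := sq_lb_of_pm h12' (by norm_num : (0:ℝ) ≤ 1/2) (by linarith)
      have h2 : (0:ℝ) ≤ ((p.1 : ℝ) + (1:ℝ) / 2) ^ 2 := sq_nonneg _
      push_cast
      push_cast at this
      linarith
  nlinarith

lemma W2_lb (p : ℤ × ℤ) (k : ℕ) (hk : 4 ≤ k) (hp : p.1.natAbs ⊔ p.2.natAbs = k) :
    (k : ℝ) - 1 ≤ ‖W I 2 p‖ := by
  have hk4 : (4 : ℝ) ≤ (k : ℝ) := by exact_mod_cast hk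
  have hnn : 0 ≤ ‖W I 2 p‖ := norm_nonneg _
  have hsq : ((k : ℝ) - 1) ^ 2 ≤ ‖W I 2 p‖ ^ 2 := by
    rw [normsq_W_I]
    rcases max_choice p.1.natAbs p.2.natAbs with hc | hc <;> rw [hc] at hp
    · have h12 : p.1 = (k : ℤ) ∨ p.1 = -(k : ℤ) := by omega
      have h12' : (p.1 : ℝ) = (k : ℝ) ∨ (p.1 : ℝ) = -(k : ℝ) := by
        rcases h12 with h | h <;> [left; right] <;> exact_mod_cast congrArg (Int.cast : ℤ → ℝ) h
      have := sq_lb_of_pm h12' (by norm_num : (0:ℝ) ≤ 1) (by linarith)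
      have h2 : (0:ℝ) ≤ ((p.2 : ℝ) + 1 / 2) ^ 2 := sq_nonneg _
      push_cast
      push_cast at this
      linarith
    · have h12 : p.2 = (k : ℤ) ∨ p.2 = -(k : ℤ) := by omega
      have h12' : (p.2 : ℝ) = (k : ℝ) ∨ (p.2 : ℝ) = -(k : ℝ) := by
        rcases h12 with h | h <;> [left; right] <;> exact_mod_cast congrArg (Int.cast : ℤ → ℝ) h
      have := sq_lb_of_pm h12' (by norm_num : (0:ℝ) ≤ 1/2) (by linarith)
      have h2 : (0:ℝ) ≤ ((p.1 : ℝ) + (2:ℝ) / 2) ^ 2 := sq_nonneg _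
      push_cast
      push_cast at this
      nlinarith
  nlinarith

lemma point_bound (j : ℕ) (p : ℤ × ℤ) (hp : p.1.natAbs ⊔ p.2.natAbs = j + 4) :
    ‖V I 2 p - V I 1 p‖ ≤
      1 / 2 * (1 / (((j : ℝ) + 3) * ((j : ℝ) + 7 / 2) ^ 2)) +
        1 / 2 * (1 / (((j : ℝ) + 3) ^ 2 * ((j : ℝ) + 7 / 2))) := by
  have h1 : ((j : ℝ) + 7 / 2) ≤ ‖W I 1 p‖ := by
    have := W1_lb p (j + 4) (by omega) hp
    push_cast at this
    linarith
  have h2 : ((j : ℝ) + 3) ≤ ‖W I 2 p‖ := by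
    have := W2_lb p (j + 4) (by omega) hp
    push_cast at this
    linarith
  have hd : ‖W I 1 p - W I 2 p‖ ≤ 1 / 2 := by
    have he : W I 1 p - W I 2 p = -(1 / 2 : ℂ) := by
      simp only [W]; push_cast; ring
    rw [he, norm_neg]
    norm_num
  exact norm_diff_le (by positivity) (by positivity) h2 h1 hd

lemma shell_bound (j : ℕ) :
    ∑ p ∈ box (j + 4), |(V I 2 p - V I 1 p).re| ≤
      12 * (1 / ((j : ℝ) + 3) - 1 / ((j : ℝ) + 4)) := by
  set Bj : ℝ := 1 / 2 * (1 / (((j : ℝ) + 3) * ((j : ℝ) + 7 / 2) ^ 2)) +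
      1 / 2 * (1 / (((j : ℝ) + 3) ^ 2 * ((j : ℝ) + 7 / 2))) with hBj
  have hb : ∀ p ∈ (box (j + 4) : Finset (ℤ × ℤ)), |(V I 2 p - V I 1 p).re| ≤ Bj := by
    intro p hp
    refine (Complex.abs_re_le_norm _).trans ?_
    exact point_bound j p (Int.mem_box.mp hp)
  calc ∑ p ∈ box (j + 4), |(V I 2 p - V I 1 p).re|
      ≤ (box (j + 4) : Finset (ℤ × ℤ)).card • Bj := Finset.sum_le_card_nsmul _ _ _ hb
    _ = ((8 * (j + 4) : ℕ) : ℝ) * Bj := by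
        rw [Int.card_box (by omega : j + 4 ≠ 0), nsmul_eq_mul]
    _ ≤ 12 * (1 / ((j : ℝ) + 3) - 1 / ((j : ℝ) + 4)) := by
        rw [hBj]
        have hx : (0 : ℝ) ≤ (j : ℝ) := Nat.cast_nonneg j
        have h3 : (0 : ℝ) < (j : ℝ) + 3 := by linarith
        have h4 : (0 : ℝ) < (j : ℝ) + 4 := by linarith
        have h7 : (0 : ℝ) < (j : ℝ) + 7 / 2 := by linarith
        have hR : 12 * (1 / ((j : ℝ) + 3) - 1 / ((j : ℝ) + 4)) =
            12 / (((j : ℝ) + 3) * ((j : ℝ) + 4)) := by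
          field_simp
          ring
        have hL : ((8 * (j + 4) : ℕ) : ℝ) *
            (1 / 2 * (1 / (((j : ℝ) + 3) * ((j : ℝ) + 7 / 2) ^ 2)) +
              1 / 2 * (1 / (((j : ℝ) + 3) ^ 2 * ((j : ℝ) + 7 / 2)))) =
            (8 * (j : ℝ) + 32) * (((j : ℝ) + 7 / 2) + ((j : ℝ) + 3)) /
              (2 * (((j : ℝ) + 3) ^ 2 * ((j : ℝ) + 7 / 2) ^ 2)) := by
          push_cast
          field_simp
          ring
        rw [hR, hL, div_le_div_iff₀ (by positivity) (by positivity)]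
        nlinarith [hx, mul_nonneg hx hx, mul_nonneg (mul_nonneg hx hx) hx,
          mul_nonneg (mul_nonneg (mul_nonneg hx hx) hx) hx]

lemma w_partial (N : ℕ) :
    ∑ j ∈ Finset.range N, (12 * (1 / ((j : ℝ) + 3) - 1 / ((j : ℝ) + 4))) =
      4 - 12 / ((N : ℝ) + 3) := by
  induction N with
  | zero => norm_num
  | succ n ih =>
      rw [Finset.sum_range_succ, ih]
      have h3 : ((n : ℝ) + 3) ≠ 0 := by positivity
      have h4 : ((n : ℝ) + 4) ≠ 0 := by positivity
      push_cast
      field_simp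
      ring

lemma wpt_I_ne : wpt (1 / 2) Complex.I ≠ 0 := by
  have hτ : (0 : ℝ) < Complex.I.im := by simp
  set g : ℤ × ℤ → ℝ := fun p => (V I 2 p - V I 1 p).re with hg_def
  have hA : Summable fun p : ℤ × ℤ => V I 2 p - V I 1 p :=
    summable_V_sub hτ (by norm_num) (by norm_num)
  have hAn : Summable fun p : ℤ × ℤ => ‖V I 2 p - V I 1 p‖ := summable_norm_iff.mpr hA
  have hg : Summable g := by
    refine Summable.of_norm_bounded hAn (fun p => ?_)
    rw [Real.norm_eq_abs]; exact Complex.abs_re_le_norm (V I 2 p - V I 1 p)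
  set K : ℤ × ℤ → ℕ := fun p => (p.1.natAbs ⊔ p.2.natAbs) - 3 with hK_def
  have hgσ : Summable (g ∘ (Equiv.sigmaFiberEquiv K)) :=
    (Equiv.sigmaFiberEquiv K).summable_iff.mpr hg
  set c : ℕ → ℝ := fun j => ∑' (b : {p : ℤ × ℤ // K p = j}), g ↑b with hc_def
  have hsig : ∑' p : ℤ × ℤ, g p = ∑' j : ℕ, c j := by
    rw [← (Equiv.sigmaFiberEquiv K).tsum_eq g]
    exact hgσ.tsum_sigma
  have hc : Summable c := hgσ.sigma
  -- identification of the fibers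
  have hfin : ∀ j : ℕ, c (j + 1) = ∑ p ∈ box (j + 4), g p := by
    intro j
    have hset : {p : ℤ × ℤ | K p = j + 1} = ↑(box (j + 4) : Finset (ℤ × ℤ)) := by
      ext p
      simp only [Set.mem_setOf_eq, Finset.coe_sort_coe, Finset.mem_coe, Int.mem_box, hK_def]
      omega
    calc c (j + 1) = ∑' (b : ↥{p : ℤ × ℤ | K p = j + 1}), g ↑b := rfl
      _ = ∑' p : ℤ × ℤ, Set.indicator {p : ℤ × ℤ | K p = j + 1} g p := _root_.tsum_subtype _ g
      _ = ∑' p : ℤ × ℤ, Set.indicator (↑(box (j + 4) : Finset (ℤ × ℤ)) : Set (ℤ × ℤ)) g p := by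
          rw [hset]
      _ = ∑' (b : ↥(↑(box (j + 4) : Finset (ℤ × ℤ)) : Set (ℤ × ℤ))), g ↑b :=
          (_root_.tsum_subtype _ g).symm
      _ = ∑ p ∈ box (j + 4), g p := Finset.tsum_subtype _ g
  have habs : ∀ j : ℕ, |c (j + 1)| ≤ 12 * (1 / ((j : ℝ) + 3) - 1 / ((j : ℝ) + 4)) := by
    intro j
    rw [hfin j]
    exact (Finset.abs_sum_le_sum_abs _ _).trans (shell_bound j)
  have hcs : Summable fun j : ℕ => c (j + 1) := (summable_nat_add_iff 1).mpr hc
  have hR : |∑' j : ℕ, c (j + 1)| ≤ 4 := by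
    have h1 : |∑' j : ℕ, c (j + 1)| ≤ ∑' j : ℕ, |c (j + 1)| := by
      simpa [Real.norm_eq_abs] using
        norm_tsum_le_tsum_norm (f := fun j : ℕ => c (j + 1))
          (by simpa [Real.norm_eq_abs] using hcs.abs)
    refine h1.trans (Real.tsum_le_of_sum_range_le (fun j => abs_nonneg _) (fun N => ?_))
    calc ∑ j ∈ Finset.range N, |c (j + 1)|
        ≤ ∑ j ∈ Finset.range N, (12 * (1 / ((j : ℝ) + 3) - 1 / ((j : ℝ) + 4))) :=
          Finset.sum_le_sum (fun j _ => habs j)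
      _ = 4 - 12 / ((N : ℝ) + 3) := w_partial N
      _ ≤ 4 := by
          have : (0 : ℝ) < (N : ℝ) + 3 := by positivity
          have : (0 : ℝ) ≤ 12 / ((N : ℝ) + 3) := by positivity
          linarith
  -- the finite part
  have hsq0 : {p : ℤ × ℤ | K p = 0} =
      ↑((Finset.Icc (-3 : ℤ) 3) ×ˢ (Finset.Icc (-3 : ℤ) 3)) := by
    ext p
    simp only [Set.mem_setOf_eq, Finset.coe_sort_coe, Finset.mem_coe, Finset.mem_product,
      Finset.mem_Icc, hK_def]
    constructor
    · intro h
      have h1 := Nat.le_max_left p.1.natAbs p.2.natAbs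
      have h2 := Nat.le_max_right p.1.natAbs p.2.natAbs
      omega
    · intro h
      have := Nat.max_le.mpr (⟨(by omega : p.1.natAbs ≤ 3), (by omega : p.2.natAbs ≤ 3)⟩ :
        p.1.natAbs ≤ 3 ∧ p.2.natAbs ≤ 3)
      omega
  have hc0 : c 0 = ∑ p ∈ (Finset.Icc (-3 : ℤ) 3) ×ˢ (Finset.Icc (-3 : ℤ) 3), g p := by
    calc c 0 = ∑' (b : ↥{p : ℤ × ℤ | K p = 0}), g ↑b := rfl
      _ = ∑' p : ℤ × ℤ, Set.indicator {p : ℤ × ℤ | K p = 0} g p := _root_.tsum_subtype _ g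
      _ = ∑' p : ℤ × ℤ, Set.indicator
          (↑((Finset.Icc (-3 : ℤ) 3) ×ˢ (Finset.Icc (-3 : ℤ) 3)) : Set (ℤ × ℤ)) g p := by
          rw [hsq0]
      _ = ∑' (b : ↥(↑((Finset.Icc (-3 : ℤ) 3) ×ˢ (Finset.Icc (-3 : ℤ) 3)) : Set (ℤ × ℤ))), g ↑b :=
          (_root_.tsum_subtype _ g).symm
      _ = ∑ p ∈ (Finset.Icc (-3 : ℤ) 3) ×ˢ (Finset.Icc (-3 : ℤ) 3), g p := Finset.tsum_subtype _ g
  have hgnm : ∀ n m : ℤ, g (n, m) =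
      (((n : ℝ) + 1) ^ 2 - ((m : ℝ) + 1 / 2) ^ 2) /
          ((((n : ℝ) + 1) ^ 2 + ((m : ℝ) + 1 / 2) ^ 2) ^ 2) -
        (((n : ℝ) + 1 / 2) ^ 2 - ((m : ℝ) + 1 / 2) ^ 2) /
          ((((n : ℝ) + 1 / 2) ^ 2 + ((m : ℝ) + 1 / 2) ^ 2) ^ 2) := by
    intro n m
    show (V I 2 (n, m) - V I 1 (n, m)).re = _
    rw [Complex.sub_re, re_V 2 (n, m), re_V 1 (n, m)]
    norm_num
  have hIcc : Finset.Icc (-3 : ℤ) 3 = ({-3, -2, -1, 0, 1, 2, 3} : Finset ℤ) := by decide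
  have hnum : c 0 ≤ -5 := by
    rw [hc0, Finset.sum_product]
    have : ∀ n ∈ Finset.Icc (-3 : ℤ) 3, ∀ m ∈ Finset.Icc (-3 : ℤ) 3, True := fun _ _ _ _ => trivial
    rw [Finset.sum_congr rfl (fun n _ => Finset.sum_congr rfl (fun m _ => hgnm n m))]
    rw [hIcc]
    norm_num [Finset.sum_insert, Finset.mem_insert, Finset.sum_singleton]
  -- conclude
  have hre : (∑' p : ℤ × ℤ, (V I 2 p - V I 1 p)).re = c 0 + ∑' j : ℕ, c (j + 1) := by
    rw [Complex.re_tsum hA]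
    rw [show (∑' p : ℤ × ℤ, (V I 2 p - V I 1 p).re) = ∑' p : ℤ × ℤ, g p from rfl, hsig]
    exact hc.tsum_eq_zero_add
  have hlt : (∑' p : ℤ × ℤ, (V I 2 p - V I 1 p)).re < 0 := by
    rw [hre]
    have h1 : ∑' j : ℕ, c (j + 1) ≤ 4 := le_trans (le_abs_self _) hR
    linarith
  have hsum_ne : (∑' p : ℤ × ℤ, (V I 2 p - V I 1 p)) ≠ 0 := by
    intro h
    rw [h] at hlt
    simp at hlt
  have hwpt : wpt (1 / 2) Complex.I =
      (Real.pi : ℂ)⁻¹ ^ 2 * ∑' p : ℤ × ℤ, (V I 2 p - V I 1 p) := by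
    unfold wpt
    congr 1
    refine tsum_congr (fun p => ?_)
    simp only [V, W]
    push_cast
    ring
  rw [hwpt]
  refine mul_ne_zero ?_ hsum_ne
  have hpi : (Real.pi : ℂ) ≠ 0 := Complex.ofReal_ne_zero.mpr Real.pi_ne_zero
  exact pow_ne_zero _ (inv_ne_zero hpi)


end WptAux

/-- `℘̃a(1/2, τ − 1) = −℘̃a(1/2, τ)`; in particular `τ ↦ ℘̃a(1/2, τ)` is `2`-periodic
but not `1`-periodic in `τ` on the upper half-plane. -/
theorem wpt_half_antiperiodic :
    (∀ τ : ℂ, 0 < τ.im → wpt (1 / 2) (τ - 1) = -wpt (1 / 2) τ) ∧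
      (∀ τ : ℂ, 0 < τ.im → wpt (1 / 2) (τ + 2) = wpt (1 / 2) τ) ∧
      ¬(∀ τ : ℂ, 0 < τ.im → wpt (1 / 2) (τ + 1) = wpt (1 / 2) τ) := by
  refine ⟨WptAux.key, fun τ hτ => ?_, fun h => ?_⟩
  · have h2 := WptAux.key (τ + 2) (by simpa using hτ)
    have h1 := WptAux.key (τ + 1) (by simpa using hτ)
    rw [show τ + 2 - 1 = τ + 1 from by ring] at h2
    rw [show τ + 1 - 1 = τ from by ring] at h1
    linear_combination h2 - h1
  · have h1 := WptAux.key (Complex.I + 1) (by simp)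
    rw [show Complex.I + 1 - 1 = Complex.I from by ring] at h1
    have h2 := h Complex.I (by simp)
    rw [h2] at h1
    exact WptAux.wpt_I_ne (by linear_combination h1 / 2)
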